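/- There exist a complex Hilbert space K, a closed subspace M ⊆ K with orthogonal projection P_M, and T ∈ B(K) such that, writing T₂₁ = (1−P_M) T P_M, T₁₂ = P_M T (1−P_M), T₂₂ = (1−P_M) T (1−P_M): range T₂₁ ⊆ range((T₂₂ T₂₂*)^{1/4}) and range(T₁₂*) ⊆ range((T₂₂* T₂₂)^{1/4}), yet there exist no C, D ∈ B(K) with T₂₂ ∘ C = T₂₁ and T₂₂* ∘ D = T₁₂*. -/

import Mathlib

open scoped ENNReal NNReal
noncomputable abbrev Hs : Type := lp (fun _ : ℕ ↦ ℂ) 2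

noncomputable instance : ContinuousFunctionalCalculus ℝ (Hs →L[ℂ] Hs) IsSelfAdjoint :=
  IsSelfAdjoint.instContinuousFunctionalCalculus

lemma summable_sq (f : Hs) : Summable (fun n => ‖f n‖ ^ (2:ℝ)) := by
  have h := (lp.memℓp f).summable (p := 2) (by norm_num)
  simpa using h

lemma memℓp_of_summable {f : ℕ → ℂ} (h : Summable fun n => ‖f n‖ ^ (2:ℝ)) :
    Memℓp f 2 := memℓp_gen (by simpa using h)

lemma rpow_two_eq (x : ℝ) : x ^ (2:ℝ) = x ^ 2 := by
  rw [show (2:ℝ) = ((2:ℕ):ℝ) by norm_num, Real.rpow_natCast]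

lemma wc_bound (c : ℕ → ℝ) (σ : ℕ → ℕ) (hc : ∀ n, |c n| ≤ 1) (x : Hs) (n : ℕ) :
    ‖(c n : ℂ) * x (σ n)‖ ^ (2:ℝ) ≤ ‖x (σ n)‖ ^ (2:ℝ) := by
  have : ‖(c n : ℂ) * x (σ n)‖ ≤ ‖x (σ n)‖ := by
    rw [norm_mul, Complex.norm_real]
    calc |c n| * ‖x (σ n)‖ ≤ 1 * ‖x (σ n)‖ :=
          mul_le_mul_of_nonneg_right (hc n) (norm_nonneg _)
      _ = _ := one_mul _
  exact Real.rpow_le_rpow (norm_nonneg _) this (by norm_num)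

lemma wc_mem (c : ℕ → ℝ) (σ : ℕ → ℕ) (hσ : Function.Injective σ)
    (hc : ∀ n, |c n| ≤ 1) (x : Hs) :
    Memℓp (fun n => (c n : ℂ) * x (σ n)) 2 := by
  apply memℓp_of_summable
  exact Summable.of_nonneg_of_le (fun n => by positivity) (wc_bound c σ hc x)
    ((summable_sq x).comp_injective hσ)

noncomputable def wc (c : ℕ → ℝ) (σ : ℕ → ℕ) (hσ : Function.Injective σ)
    (hc : ∀ n, |c n| ≤ 1) : Hs →L[ℂ] Hs :=
  LinearMap.mkContinuous
    { toFun := fun x => ⟨fun n => (c n : ℂ) * x (σ n), wc_mem c σ hσ hc x⟩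
      map_add' := by
        intro x y; apply lp.ext; funext n
        simp [lp.coeFn_add, mul_add]
        rfl
      map_smul' := by
        intro a x; apply lp.ext; funext n
        simp [lp.coeFn_smul]
        ring }
    1
    (by
      intro x
      rw [one_mul]
      apply lp.norm_le_of_tsum_le (by norm_num) (norm_nonneg _)
      have hsum : Summable (fun n => ‖(c n : ℂ) * x (σ n)‖ ^ (2:ℝ)) :=
        Summable.of_nonneg_of_le (fun n => by positivity) (wc_bound c σ hc x)
          ((summable_sq x).comp_injective hσ)
      have key : (∑' n, ‖(c n : ℂ) * x (σ n)‖ ^ (2:ℝ)) ≤ ‖x‖ ^ (2:ℝ) := by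
        calc (∑' n, ‖(c n : ℂ) * x (σ n)‖ ^ (2:ℝ))
            ≤ ∑' n, ‖x (σ n)‖ ^ (2:ℝ) :=
              Summable.tsum_le_tsum (wc_bound c σ hc x) hsum
                ((summable_sq x).comp_injective hσ)
          _ ≤ ∑' n, ‖x n‖ ^ (2:ℝ) :=
              tsum_comp_le_tsum_of_inj (summable_sq x) (fun n => by positivity) hσ
          _ = ‖x‖ ^ (2:ℝ) := by
              simpa using (lp.norm_rpow_eq_tsum (p := 2) (by norm_num) x).symm
      simpa using key)

@[simp] lemma wc_apply (c : ℕ → ℝ) (σ : ℕ → ℕ) (hσ : Function.Injective σ)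
    (hc : ∀ n, |c n| ≤ 1) (x : Hs) (n : ℕ) :
    (wc c σ hσ hc x) n = (c n : ℂ) * x (σ n) := rfl

lemma rpow4 (X : Hs →L[ℂ] Hs) (hX : 0 ≤ X) : CFC.rpow (X^4) (1/4 : ℝ) = X := by
  rw [CFC.rpow_eq_pow, ← CFC.rpow_natCast X 4 hX,
    CFC.rpow_rpow_of_exponent_nonneg X ((4:ℕ):ℝ) (1/4) (by norm_num) (by norm_num) hX]
  norm_num
  exact CFC.rpow_one X hX

lemma adjoint_diag (c : ℕ → ℝ) (hc : ∀ n, |c n| ≤ 1) :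
    ContinuousLinearMap.adjoint (wc c id (fun _ _ h => h) hc) = wc c id (fun _ _ h => h) hc := by
  refine ((ContinuousLinearMap.eq_adjoint_iff _ _).mpr fun x y => ?_).symm
  rw [lp.inner_eq_tsum, lp.inner_eq_tsum]
  refine tsum_congr fun n => ?_
  erw [wc_apply, wc_apply]
  simp [RCLike.inner_apply, map_mul, Complex.conj_ofReal, wc_apply]
  ring

-- coefficients
noncomputable def bb (k : ℕ) : ℝ := (Real.sqrt ((k:ℝ)+1))⁻¹

lemma bb_pos (k : ℕ) : 0 < bb k := by
  have : 0 < Real.sqrt ((k:ℝ)+1) := Real.sqrt_pos.mpr (by positivity)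
  exact inv_pos.mpr this

lemma bb_le_one (k : ℕ) : bb k ≤ 1 := by
  have h1 : (1:ℝ) ≤ Real.sqrt ((k:ℝ)+1) := by
    have h := Real.sqrt_le_sqrt (show (1:ℝ) ≤ (k:ℝ)+1 by
      have : (0:ℝ) ≤ (k:ℝ) := Nat.cast_nonneg k; linarith)
    simpa using h
  calc bb k ≤ 1⁻¹ := by
        exact inv_anti₀ (by norm_num) h1
    _ = 1 := by norm_num

lemma bb_sq (k : ℕ) : bb k * bb k = ((k:ℝ)+1)⁻¹ := by
  rw [bb, ← mul_inv]
  rw [Real.mul_self_sqrt (by positivity)]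

def σs (n : ℕ) : ℕ := if Even n then n + 1 else n - 1

lemma σs_even (k : ℕ) : σs (2*k) = 2*k+1 := by
  simp [σs, even_two_mul]

lemma σs_odd (k : ℕ) : σs (2*k+1) = 2*k := by
  have : ¬ Even (2*k+1) := by simp [Nat.even_add_one, even_two_mul]
  simp [σs, this]

lemma σs_inj : Function.Injective σs := by
  have hinv : ∀ n, σs (σs n) = n := by
    intro n
    rcases Nat.even_or_odd n with ⟨k, rfl⟩ | ⟨k, rfl⟩
    · rw [show k + k = 2*k by ring, σs_even, σs_odd]
    · rw [σs_odd, σs_even]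
  intro a b h
  rw [← hinv a, h, hinv b]

def cp (n : ℕ) : ℝ := if Even n then 1 else 0
noncomputable def c1 (n : ℕ) : ℝ := if Even n then 0 else bb (n/2)
noncomputable def c2 (n : ℕ) : ℝ := (c1 n)^2
noncomputable def cy (n : ℕ) : ℝ := Real.sqrt (c1 n)
def cu (n : ℕ) : ℝ := if Even n then 0 else 1

lemma c1_nonneg (n : ℕ) : 0 ≤ c1 n := by
  unfold c1; split
  · exact le_refl 0
  · exact (bb_pos _).le

lemma hcp : ∀ n, |cp n| ≤ 1 := by
  intro n; unfold cp; split <;> simp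

lemma hc1 : ∀ n, |c1 n| ≤ 1 := by
  intro n; unfold c1; split
  · simp
  · rw [abs_of_nonneg (bb_pos _).le]; exact bb_le_one _

lemma hc2 : ∀ n, |c2 n| ≤ 1 := by
  intro n; unfold c2
  rw [abs_pow]
  calc |c1 n| ^ 2 ≤ 1 ^ 2 := pow_le_pow_left₀ (abs_nonneg _) (hc1 n) 2
    _ = 1 := one_pow 2

lemma hcy : ∀ n, |cy n| ≤ 1 := by
  intro n; unfold cy
  rw [abs_of_nonneg (Real.sqrt_nonneg _)]
  rw [show (1:ℝ) = Real.sqrt 1 by simp]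
  exact Real.sqrt_le_sqrt (by simpa using (abs_le.mp (hc1 n)).2)

lemma hcu : ∀ n, |cu n| ≤ 1 := by
  intro n; unfold cu; split <;> simp

-- parity simp lemmas for coefficients
@[simp] lemma cp_even (k : ℕ) : cp (2*k) = 1 := by simp [cp, even_two_mul]
@[simp] lemma cp_odd (k : ℕ) : cp (2*k+1) = 0 := by
  simp [cp, Nat.even_add_one, even_two_mul]
@[simp] lemma c1_even (k : ℕ) : c1 (2*k) = 0 := by simp [c1, even_two_mul]
@[simp] lemma c1_odd (k : ℕ) : c1 (2*k+1) = bb k := by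
  have h2 : (2*k+1)/2 = k := by omega
  simp [c1, Nat.even_add_one, even_two_mul, h2]
@[simp] lemma c2_even (k : ℕ) : c2 (2*k) = 0 := by simp [c2]
@[simp] lemma c2_odd (k : ℕ) : c2 (2*k+1) = bb k ^ 2 := by simp [c2]
@[simp] lemma cu_even (k : ℕ) : cu (2*k) = 0 := by simp [cu, even_two_mul]
@[simp] lemma cu_odd (k : ℕ) : cu (2*k+1) = 1 := by
  simp [cu, Nat.even_add_one, even_two_mul]
@[simp] lemma cy_even (k : ℕ) : cy (2*k) = 0 := by simp [cy]
@[simp] lemma cy_odd (k : ℕ) : cy (2*k+1) = Real.sqrt (bb k) := by simp [cy]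

noncomputable def Pop : Hs →L[ℂ] Hs := wc cp id (fun _ _ h => h) hcp
noncomputable def W1 : Hs →L[ℂ] Hs := wc c1 σs σs_inj hc1
noncomputable def W2 : Hs →L[ℂ] Hs := wc c2 id (fun _ _ h => h) hc2
noncomputable def Xop : Hs →L[ℂ] Hs := wc c1 id (fun _ _ h => h) hc1
noncomputable def Yop : Hs →L[ℂ] Hs := wc cy id (fun _ _ h => h) hcy
noncomputable def Uop : Hs →L[ℂ] Hs := wc cu σs σs_inj hcu
noncomputable def Tt : Hs →L[ℂ] Hs := W1 + W2

@[simp] lemma Pop_apply (x : Hs) (n : ℕ) : (Pop x) n = (cp n : ℂ) * x n := rfl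
@[simp] lemma W1_apply (x : Hs) (n : ℕ) : (W1 x) n = (c1 n : ℂ) * x (σs n) := rfl
@[simp] lemma W2_apply (x : Hs) (n : ℕ) : (W2 x) n = (c2 n : ℂ) * x n := rfl
@[simp] lemma Xop_apply (x : Hs) (n : ℕ) : (Xop x) n = (c1 n : ℂ) * x n := rfl
@[simp] lemma Yop_apply (x : Hs) (n : ℕ) : (Yop x) n = (cy n : ℂ) * x n := rfl
@[simp] lemma Uop_apply (x : Hs) (n : ℕ) : (Uop x) n = (cu n : ℂ) * x (σs n) := rfl

lemma sub_coord (x y : Hs) (n : ℕ) : (x - y) n = x n - y n := by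
  rw [lp.coeFn_sub]; rfl

lemma oneSubP_apply (x : Hs) (n : ℕ) : (((1 : Hs →L[ℂ] Hs) - Pop) x) n
    = x n - (cp n : ℂ) * x n := by
  rw [ContinuousLinearMap.sub_apply, ContinuousLinearMap.one_apply, sub_coord]
  rfl

lemma hT22 : (((1 : Hs →L[ℂ] Hs) - Pop).comp Tt).comp (1 - Pop) = W2 := by
  ext x n
  rw [ContinuousLinearMap.comp_apply, ContinuousLinearMap.comp_apply]
  rw [oneSubP_apply, W2_apply]
  have hT : ∀ (y : Hs) (m : ℕ), (Tt y) m = (c1 m : ℂ) * y (σs m) + (c2 m : ℂ) * y m := by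
    intro y m
    show ((W1 + W2) y) m = _
    rw [ContinuousLinearMap.add_apply, lp.coeFn_add]
    rfl
  rw [hT, oneSubP_apply, oneSubP_apply]
  rcases Nat.even_or_odd n with ⟨k, rfl⟩ | ⟨k, rfl⟩
  · rw [show k + k = 2*k by ring]
    simp
  · rw [σs_odd]
    simp
lemma hT21 : (((1 : Hs →L[ℂ] Hs) - Pop).comp Tt).comp Pop = W1 := by
  ext x n
  rw [ContinuousLinearMap.comp_apply, ContinuousLinearMap.comp_apply]
  rw [oneSubP_apply, W1_apply]
  have hT : ∀ (y : Hs) (m : ℕ), (Tt y) m = (c1 m : ℂ) * y (σs m) + (c2 m : ℂ) * y m := by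
    intro y m
    show ((W1 + W2) y) m = _
    rw [ContinuousLinearMap.add_apply, lp.coeFn_add]
    rfl
  rw [hT, Pop_apply, Pop_apply]
  rcases Nat.even_or_odd n with ⟨k, rfl⟩ | ⟨k, rfl⟩
  · rw [show k + k = 2*k by ring]
    simp
  · rw [σs_odd]
    simp

lemma hT12 : (Pop.comp Tt).comp ((1 : Hs →L[ℂ] Hs) - Pop) = 0 := by
  ext x n
  rw [ContinuousLinearMap.comp_apply, ContinuousLinearMap.comp_apply, Pop_apply]
  have hT : ∀ (y : Hs) (m : ℕ), (Tt y) m = (c1 m : ℂ) * y (σs m) + (c2 m : ℂ) * y m := by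
    intro y m
    show ((W1 + W2) y) m = _
    rw [ContinuousLinearMap.add_apply, lp.coeFn_add]
    rfl
  rw [hT]
  have h0 : ((0 : Hs →L[ℂ] Hs) x) n = 0 := rfl
  rw [h0]
  rcases Nat.even_or_odd n with ⟨k, rfl⟩ | ⟨k, rfl⟩
  · rw [show k + k = 2*k by ring]; simp
  · simp

lemma hXU : Xop.comp Uop = W1 := by
  ext x n
  rw [ContinuousLinearMap.comp_apply, Xop_apply, Uop_apply, W1_apply]
  rcases Nat.even_or_odd n with ⟨k, rfl⟩ | ⟨k, rfl⟩
  · rw [show k + k = 2*k by ring]; simp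
  · simp

lemma hYY : Yop * Yop = Xop := by
  ext x n
  rw [ContinuousLinearMap.mul_apply, Yop_apply, Yop_apply, Xop_apply]
  rw [← mul_assoc, ← Complex.ofReal_mul]
  simp only [cy]
  rw [Real.mul_self_sqrt (c1_nonneg n)]

lemma hX4 : Xop^4 = W2 * W2 := by
  ext x n
  have h4 : Xop^4 = ((Xop * Xop) * Xop) * Xop := by
    rw [pow_succ, pow_succ, pow_two]
  rw [h4]
  rw [ContinuousLinearMap.mul_apply, ContinuousLinearMap.mul_apply,
    ContinuousLinearMap.mul_apply, ContinuousLinearMap.mul_apply]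
  rw [Xop_apply, Xop_apply, Xop_apply, Xop_apply, W2_apply, W2_apply]
  unfold c2
  push_cast
  ring

lemma hPadj : ContinuousLinearMap.adjoint Pop = Pop := adjoint_diag cp hcp
lemma hW2adj : star W2 = W2 := by
  rw [ContinuousLinearMap.star_eq_adjoint]; exact adjoint_diag c2 hc2
lemma hYadj : star Yop = Yop := by
  rw [ContinuousLinearMap.star_eq_adjoint]; exact adjoint_diag cy hcy

lemma hXpos : (0 : Hs →L[ℂ] Hs) ≤ Xop := by
  have h := star_mul_self_nonneg Yop
  rwa [hYadj, hYY] at h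

lemma hrpow : CFC.rpow (W2 * star W2) (1/4 : ℝ) = Xop := by
  rw [hW2adj, ← hX4]; exact rpow4 Xop hXpos

lemma hrpow' : CFC.rpow (star W2 * W2) (1/4 : ℝ) = Xop := by
  rw [hW2adj, ← hX4]; exact rpow4 Xop hXpos


-- the test vector
noncomputable def xf (n : ℕ) : ℂ := if Even n then ((n/2 + 1 : ℕ) : ℂ)⁻¹ else 0

@[simp] lemma xf_even (k : ℕ) : xf (2*k) = ((k + 1 : ℕ) : ℂ)⁻¹ := by
  have h2 : (2*k)/2 = k := by omega
  simp [xf, even_two_mul, h2]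
@[simp] lemma xf_odd (k : ℕ) : xf (2*k+1) = 0 := by
  simp [xf, Nat.even_add_one, even_two_mul]

lemma summable_base : Summable (fun k : ℕ => (((k + 1 : ℕ) : ℝ)⁻¹)^2) := by
  have h : Summable (fun n : ℕ => 1/(n:ℝ)^2) :=
    Real.summable_one_div_nat_pow.mpr (by norm_num)
  have h2 := (summable_nat_add_iff (f := fun n : ℕ => 1/(n:ℝ)^2) 1).mpr h
  refine h2.congr fun k => ?_
  rw [one_div, inv_pow]

lemma norm_nat_inv (m : ℕ) : ‖((m:ℂ))⁻¹‖ = ((m:ℝ))⁻¹ := by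
  rw [norm_inv, Complex.norm_natCast]

lemma xf_mem : Memℓp xf 2 := by
  apply memℓp_of_summable
  have hinj : Function.Injective (fun k : ℕ => 2*k) :=
    fun a b h => Nat.eq_of_mul_eq_mul_left (by norm_num) h
  have hzero : ∀ n ∉ Set.range (fun k : ℕ => 2*k), ‖xf n‖ ^ (2:ℝ) = 0 := by
    intro n hn
    rcases Nat.even_or_odd n with ⟨k, rfl⟩ | ⟨k, rfl⟩
    · exact absurd ⟨k, show 2*k = k + k by ring⟩ hn
    · rw [xf_odd]
      simp
  refine (Function.Injective.summable_iff hinj hzero).mp ?_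
  refine summable_base.congr fun k => ?_
  show (((k + 1:ℕ):ℝ)⁻¹)^2 = ‖xf (2*k)‖ ^ (2:ℝ)
  rw [xf_even, rpow_two_eq, norm_nat_inv]

noncomputable def xv : Hs := ⟨xf, xf_mem⟩

@[simp] lemma xv_coord (n : ℕ) : xv n = xf n := rfl

lemma not_solvable : ¬ (∃ C : Hs →L[ℂ] Hs, W2.comp C = W1) := by
  rintro ⟨C, hC⟩
  set w : Hs := C xv with hw
  have hkey : ∀ k : ℕ, w (2*k+1) = (bb k : ℂ) := by
    intro k
    have h := congrArg (fun A : Hs →L[ℂ] Hs => (A xv) (2*k+1)) hC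
    simp only [ContinuousLinearMap.comp_apply, W2_apply, W1_apply, ← hw] at h
    rw [c2_odd, c1_odd, σs_odd, xv_coord, xf_even] at h
    push_cast at h
    -- h : (bb k:ℂ)^2 * w (2k+1) = (bb k:ℂ) * ((k:ℂ)+1)⁻¹
    have hbne : ((bb k : ℝ) : ℂ) ≠ 0 := by
      simpa using (bb_pos k).ne'
    have hb2 : ((bb k : ℝ) : ℂ) * ((bb k : ℝ) : ℂ) = ((k:ℂ)+1)⁻¹ := by
      rw [← Complex.ofReal_mul, bb_sq]
      push_cast
      ring
    have h2 : ((bb k:ℝ):ℂ)^2 * w (2*k+1) = ((bb k:ℝ):ℂ)^2 * (bb k : ℂ) := by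
      calc ((bb k:ℝ):ℂ)^2 * w (2*k+1) = ((bb k:ℝ):ℂ) * ((k:ℂ)+1)⁻¹ := h
        _ = ((bb k:ℝ):ℂ) * (((bb k:ℝ):ℂ) * ((bb k:ℝ):ℂ)) := by rw [hb2]
        _ = ((bb k:ℝ):ℂ)^2 * (bb k : ℂ) := by ring
    exact mul_left_cancel₀ (pow_ne_zero 2 hbne) h2
  have hsum := (summable_sq w).comp_injective
    (i := fun k : ℕ => 2*k+1) (fun a b h => by
      have h' : 2*a+1 = 2*b+1 := h
      omega)
  have hsum2 : Summable (fun k : ℕ => ((k:ℝ)+1)⁻¹) := by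
    refine hsum.congr fun k => ?_
    show ‖w (2*k+1)‖ ^ (2:ℝ) = ((k:ℝ)+1)⁻¹
    rw [hkey k, rpow_two_eq, Complex.norm_real, Real.norm_eq_abs,
      abs_of_nonneg (bb_pos k).le, pow_two, bb_sq]
  have hsum3 : Summable (fun n : ℕ => (n:ℝ)⁻¹) := by
    rw [← summable_nat_add_iff (f := fun n : ℕ => (n:ℝ)⁻¹) 1]
    refine hsum2.congr fun k => ?_
    push_cast
    ring
  exact Real.not_summable_natCast_inv hsum3

lemma hPP : Pop.comp Pop = Pop := by
  ext x n
  rw [ContinuousLinearMap.comp_apply, Pop_apply, Pop_apply]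
  rcases Nat.even_or_odd n with ⟨k, rfl⟩ | ⟨k, rfl⟩
  · rw [show k + k = 2*k by ring]; simp
  · simp


/-- Theorem 6.4: there exist a Hilbert space `K`, a closed subspace `M` (described by its
orthogonal projection `P`) and `T ∈ B(K)` such that `T` is `(M,M)`-weakly complementable
(the two range inclusions hold) but `T` is not `(M,M)`-complementable (the two systems
`T₂₂ C = T₂₁` and `T₂₂* D = T₁₂*` are not both solvable). -/
theorem exists_weakly_complementable_not_complementable :
    ∃ (K : Type) (_ : NormedAddCommGroup K) (_ : InnerProductSpace ℂ K)
      (_ : CompleteSpace K) (M : Submodule ℂ K) (P : K →L[ℂ] K) (T : K →L[ℂ] K),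
      ContinuousLinearMap.adjoint P = P ∧
      (∀ x : K, P x ∈ M) ∧ (∀ x ∈ M, P x = x) ∧
      Set.range (((1 - P).comp T).comp P) ⊆
        Set.range (CFC.rpow
          ((((1 - P).comp T).comp (1 - P)) *
            star (((1 - P).comp T).comp (1 - P)) : K →L[ℂ] K) (1/4 : ℝ) : K →L[ℂ] K) ∧
      Set.range (ContinuousLinearMap.adjoint ((P.comp T).comp (1 - P))) ⊆
        Set.range (CFC.rpow
          ((star (((1 - P).comp T).comp (1 - P))) *
            (((1 - P).comp T).comp (1 - P)) : K →L[ℂ] K) (1/4 : ℝ) : K →L[ℂ] K) ∧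
      ¬∃ (C : K →L[ℂ] K) (D : K →L[ℂ] K),
        (((1 - P).comp T).comp (1 - P)).comp C = ((1 - P).comp T).comp P ∧
        (star (((1 - P).comp T).comp (1 - P))).comp D =
          ContinuousLinearMap.adjoint ((P.comp T).comp (1 - P)) := by
  refine ⟨Hs, inferInstance, inferInstance, inferInstance,
    LinearMap.range (Pop : Hs →ₗ[ℂ] Hs), Pop, Tt, hPadj, ?_, ?_, ?_, ?_, ?_⟩
  · intro x
    exact ⟨x, rfl⟩
  · rintro x ⟨y, rfl⟩
    show Pop (Pop y) = Pop y
    rw [← ContinuousLinearMap.comp_apply, hPP]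
  · rw [hT21, hT22]; erw [hrpow]
    rintro _ ⟨y, rfl⟩
    exact ⟨Uop y, by rw [← hXU]; rfl⟩
  · rw [hT12, hT22]; erw [hrpow']
    have hz : ContinuousLinearMap.adjoint (0 : Hs →L[ℂ] Hs) = 0 := by simp
    rw [hz]
    rintro _ ⟨y, rfl⟩
    exact ⟨0, by simp⟩
  · rintro ⟨C, D, hC, hD⟩
    rw [hT22, hT21] at hC
    exact not_solvable ⟨C, hC⟩
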